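/- Let κ₋ > κ₊ ≥ 0 and u ∈ ℝ. Define x∞ = 4u(κ₊ − κ₋)/((κ₊ + κ₋)² + 8u²) and z∞ = (κ₊² − κ₋²)/((κ₊ + κ₋)² + 8u²), and set ρ̄ = (1/2)(I + x∞ σx + z∞ σz), a 2×2 matrix. Then ρ̄ is a density matrix and it satisfies −i u [σy, ρ̄] + κ₋ D_{σ₋}(ρ̄) + κ₊ D_{σ₊}(ρ̄) = 0. -/

import Mathlib

open scoped Matrix ComplexOrder

/-- The dissipator `D_X(ρ) = XρX† − (1/2)(X†Xρ + ρX†X)`. -/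
noncomputable def dissipator (X ρ : Matrix (Fin 2) (Fin 2) ℂ) :
    Matrix (Fin 2) (Fin 2) ℂ :=
  X * ρ * Xᴴ - (1 / 2 : ℂ) • (Xᴴ * X * ρ + ρ * (Xᴴ * X))

/- Basis ordering: index `0 = |e⟩`, index `1 = |g⟩`, so `σz|g⟩ = −|g⟩`, `σz|e⟩ = |e⟩`. -/

/-- Pauli matrix `σx`. -/
noncomputable def sigmaX : Matrix (Fin 2) (Fin 2) ℂ := !![0, 1; 1, 0]

/-- Pauli matrix `σy`. -/
noncomputable def sigmaY : Matrix (Fin 2) (Fin 2) ℂ := !![0, -Complex.I; Complex.I, 0]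

/-- Pauli matrix `σz`. -/
noncomputable def sigmaZ : Matrix (Fin 2) (Fin 2) ℂ := !![1, 0; 0, -1]

/-- Lowering operator `σ₋ = |g⟩⟨e|`. -/
noncomputable def sigmaMinus : Matrix (Fin 2) (Fin 2) ℂ := !![0, 0; 1, 0]

/-- Raising operator `σ₊ = |e⟩⟨g|`. -/
noncomputable def sigmaPlus : Matrix (Fin 2) (Fin 2) ℂ := !![0, 1; 0, 0]

@[simp] lemma of_mat_apply (M : Matrix (Fin 2) (Fin 2) ℂ) (i j : Fin 2) :
    Matrix.of M i j = M i j := rfl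

@[simp] lemma of_mat_eq (M : Matrix (Fin 2) (Fin 2) ℂ) :
    (Matrix.of M : Matrix (Fin 2) (Fin 2) ℂ) = M := rfl

lemma key_ineq (x z A B R : ℝ) (h : x^2+z^2 ≤ 1) (hA : 0 ≤ A) (hB : 0 ≤ B) (hR : R^2 ≤ A*B) :
    0 ≤ (1+z)/2 * A + x * R + (1-z)/2 * B := by
  have c1 : (z*(A-B) + x*(2*R))^2 ≤ (z^2+x^2)*((A-B)^2+(2*R)^2) := by
    nlinarith [sq_nonneg (x*(A-B) - z*(2*R))]
  have c2 : (A-B)^2+(2*R)^2 ≤ (A+B)^2 := by nlinarith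
  have c3 : (z*(A-B) + x*(2*R))^2 ≤ (A+B)^2 := by
    nlinarith [sq_nonneg (A-B), sq_nonneg (2*R)]
  nlinarith [c3]

lemma bloch_psd (x z : ℝ) (h : x^2 + z^2 ≤ 1) :
    (Matrix.of !![((1+z)/2 : ℂ), (x/2 : ℂ); (x/2 : ℂ), ((1-z)/2 : ℂ)]).PosSemidef := by
  rw [Matrix.posSemidef_iff_dotProduct_mulVec]
  constructor
  · ext i j
    fin_cases i <;> fin_cases j <;>
      simp [Matrix.conjTranspose_apply, Complex.ext_iff]
  · intro v
    set a := v 0; set b := v 1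
    have expand : dotProduct (star v) ((Matrix.of !![((1+z)/2 : ℂ), (x/2 : ℂ); (x/2 : ℂ), ((1-z)/2 : ℂ)]).mulVec v)
        = (((1+z)/2 * Complex.normSq a + x * (starRingEnd ℂ a * b).re + (1-z)/2 * Complex.normSq b : ℝ) : ℂ) := by
      apply Complex.ext <;>
        simp [dotProduct, Matrix.mulVec, Fin.sum_univ_two, Complex.add_re,
          Complex.add_im, Complex.mul_re, Complex.mul_im, Complex.normSq_apply] <;> ring
    rw [expand]
    rw [Complex.zero_le_real]
    have h1 : (starRingEnd ℂ a * b).re ^ 2 ≤ Complex.normSq a * Complex.normSq b := by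
      have e1 : Complex.normSq (starRingEnd ℂ a * b) = (starRingEnd ℂ a * b).re ^ 2 + (starRingEnd ℂ a * b).im ^ 2 := by
        rw [Complex.normSq_apply]; ring
      have e2 : Complex.normSq (starRingEnd ℂ a * b) = Complex.normSq a * Complex.normSq b := by
        rw [Complex.normSq_mul, Complex.normSq_conj]
      nlinarith [sq_nonneg (starRingEnd ℂ a * b).im]
    exact key_ineq x z _ _ _ h (Complex.normSq_nonneg a) (Complex.normSq_nonneg b) h1

set_option maxHeartbeats 2000000 in
/-- for `κ₋ > κ₊ ≥ 0` and `u ∈ ℝ`, the matrix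
`ρ̄ = (1/2)(I + x∞ σx + z∞ σz)` with `x∞ = 4u(κ₊−κ₋)/((κ₊+κ₋)²+8u²)` and
`z∞ = (κ₊²−κ₋²)/((κ₊+κ₋)²+8u²)` is a density matrix and satisfies
`−iu[σy,ρ̄] + κ₋ D_{σ₋}(ρ̄) + κ₊ D_{σ₊}(ρ̄) = 0`. -/
theorem stmt18 (κm κp u : ℝ) (hκ : κp < κm) (hκp : 0 ≤ κp) :
    ((1 / 2 : ℂ) • ((1 : Matrix (Fin 2) (Fin 2) ℂ)
        + ((4 * u * (κp - κm) / ((κp + κm) ^ 2 + 8 * u ^ 2) : ℝ) : ℂ) • sigmaX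
        + (((κp ^ 2 - κm ^ 2) / ((κp + κm) ^ 2 + 8 * u ^ 2) : ℝ) : ℂ) • sigmaZ)).PosSemidef ∧
    ((1 / 2 : ℂ) • ((1 : Matrix (Fin 2) (Fin 2) ℂ)
        + ((4 * u * (κp - κm) / ((κp + κm) ^ 2 + 8 * u ^ 2) : ℝ) : ℂ) • sigmaX
        + (((κp ^ 2 - κm ^ 2) / ((κp + κm) ^ 2 + 8 * u ^ 2) : ℝ) : ℂ) • sigmaZ)).trace = 1 ∧
    (-Complex.I * (u : ℂ)) •
        (sigmaY * ((1 / 2 : ℂ) • ((1 : Matrix (Fin 2) (Fin 2) ℂ)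
            + ((4 * u * (κp - κm) / ((κp + κm) ^ 2 + 8 * u ^ 2) : ℝ) : ℂ) • sigmaX
            + (((κp ^ 2 - κm ^ 2) / ((κp + κm) ^ 2 + 8 * u ^ 2) : ℝ) : ℂ) • sigmaZ))
          - ((1 / 2 : ℂ) • ((1 : Matrix (Fin 2) (Fin 2) ℂ)
            + ((4 * u * (κp - κm) / ((κp + κm) ^ 2 + 8 * u ^ 2) : ℝ) : ℂ) • sigmaX
            + (((κp ^ 2 - κm ^ 2) / ((κp + κm) ^ 2 + 8 * u ^ 2) : ℝ) : ℂ) • sigmaZ)) * sigmaY)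
      + (κm : ℂ) • dissipator sigmaMinus
          ((1 / 2 : ℂ) • ((1 : Matrix (Fin 2) (Fin 2) ℂ)
            + ((4 * u * (κp - κm) / ((κp + κm) ^ 2 + 8 * u ^ 2) : ℝ) : ℂ) • sigmaX
            + (((κp ^ 2 - κm ^ 2) / ((κp + κm) ^ 2 + 8 * u ^ 2) : ℝ) : ℂ) • sigmaZ))
      + (κp : ℂ) • dissipator sigmaPlus
          ((1 / 2 : ℂ) • ((1 : Matrix (Fin 2) (Fin 2) ℂ)
            + ((4 * u * (κp - κm) / ((κp + κm) ^ 2 + 8 * u ^ 2) : ℝ) : ℂ) • sigmaX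
            + (((κp ^ 2 - κm ^ 2) / ((κp + κm) ^ 2 + 8 * u ^ 2) : ℝ) : ℂ) • sigmaZ)) = 0 := by
  have hκm : 0 < κm := lt_of_le_of_lt hκp hκ
  have hD : (0:ℝ) < (κp + κm) ^ 2 + 8 * u ^ 2 := by nlinarith
  set X : ℝ := 4 * u * (κp - κm) / ((κp + κm) ^ 2 + 8 * u ^ 2) with hX
  set Z : ℝ := (κp ^ 2 - κm ^ 2) / ((κp + κm) ^ 2 + 8 * u ^ 2) with hZ
  have hXZ : X ^ 2 + Z ^ 2 ≤ 1 := by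
    rw [hX, hZ, div_pow, div_pow, ← add_div, div_le_one (by positivity)]
    nlinarith [sq_nonneg u, sq_nonneg (u^2), mul_nonneg (mul_nonneg hκp hκm.le)
      (add_nonneg (sq_nonneg (κp+κm)) (by positivity : (0:ℝ) ≤ 16*u^2))]
  have hrho : (1 / 2 : ℂ) • ((1 : Matrix (Fin 2) (Fin 2) ℂ) + (X:ℂ) • sigmaX + (Z:ℂ) • sigmaZ)
      = Matrix.of !![((1+Z)/2 : ℂ), (X/2 : ℂ); (X/2 : ℂ), ((1-Z)/2 : ℂ)] := by
    ext i j
    fin_cases i <;> fin_cases j <;>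
      simp [sigmaX, sigmaZ, Matrix.one_apply] <;> push_cast <;> ring
  refine ⟨?_, ?_, ?_⟩
  · rw [hrho]; exact bloch_psd X Z hXZ
  · simp [Matrix.trace, Matrix.diag, sigmaX, sigmaZ, Fin.sum_univ_two, Matrix.one_apply]
    push_cast; ring
  · have hDc : (((κp + κm) ^ 2 + 8 * u ^ 2 : ℝ) : ℂ) ≠ 0 := by
      exact_mod_cast hD.ne'
    rw [hrho]
    have hD1 : ((u:ℂ) ^ 2 * 8 + (κp:ℂ) * κm * 2 + (κp:ℂ) ^ 2 + (κm:ℂ) ^ 2) ≠ 0 := by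
      have e : ((u:ℂ) ^ 2 * 8 + (κp:ℂ) * κm * 2 + (κp:ℂ) ^ 2 + (κm:ℂ) ^ 2)
          = (((κp + κm) ^ 2 + 8 * u ^ 2 : ℝ) : ℂ) := by push_cast; ring
      rw [e]; exact hDc
    have hD2 : ((u:ℂ) ^ 2 * 16 + (κp:ℂ) * κm * 4 + (κp:ℂ) ^ 2 * 2 + (κm:ℂ) ^ 2 * 2) ≠ 0 := by
      have e : ((u:ℂ) ^ 2 * 16 + (κp:ℂ) * κm * 4 + (κp:ℂ) ^ 2 * 2 + (κm:ℂ) ^ 2 * 2)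
          = 2 * (((κp + κm) ^ 2 + 8 * u ^ 2 : ℝ) : ℂ) := by push_cast; ring
      rw [e]; exact mul_ne_zero two_ne_zero hDc
    have hD3 : ((u:ℂ) ^ 2 * 32 + (κp:ℂ) * κm * 8 + (κp:ℂ) ^ 2 * 4 + (κm:ℂ) ^ 2 * 4) ≠ 0 := by
      have e : ((u:ℂ) ^ 2 * 32 + (κp:ℂ) * κm * 8 + (κp:ℂ) ^ 2 * 4 + (κm:ℂ) ^ 2 * 4)
          = 4 * (((κp + κm) ^ 2 + 8 * u ^ 2 : ℝ) : ℂ) := by push_cast; ring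
      rw [e]; exact mul_ne_zero four_ne_zero hDc
    have hcm : (!![0, 0; 1, 0] : Matrix (Fin 2) (Fin 2) ℂ)ᴴ = !![0, 1; 0, 0] := by
      ext i j; fin_cases i <;> fin_cases j <;> simp
    have hcp : (!![0, 1; 0, 0] : Matrix (Fin 2) (Fin 2) ℂ)ᴴ = !![0, 0; 1, 0] := by
      ext i j; fin_cases i <;> fin_cases j <;> simp
    ext i j
    fin_cases i <;> fin_cases j <;>
      · simp [dissipator, sigmaX, sigmaY, sigmaZ, sigmaMinus, sigmaPlus, hcm, hcp,
          Matrix.mul_apply, Fin.sum_univ_two, Matrix.vecHead, Matrix.vecTail]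
        simp only [hX, hZ]
        push_cast
        field_simp
        ring_nf
        field_simp [hD1, hD2, hD3]
        rw [Complex.I_sq]
        ring
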